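/- Let D be a continuous probability distribution on ℝ² and q ∈ ℝ² a fixed point. For every ε > 0 there exists a finite family of cones with apex q, partitioning the plane, such that for each cone V in the family, Pr_{p ∼ D}[the line through q and p meets V \ {q}] ≤ 1/2. -/

import Mathlib

open MeasureTheory
open Filter

noncomputable def coneFun (q : ℝ × ℝ) (θ : ℝ) (p : ℝ × ℝ) : ℝ :=
  (p.2 - q.2) * ((p.2 - q.2) * Real.cos θ - (p.1 - q.1) * Real.sin θ)

def cone (q : ℝ × ℝ) (θ : ℝ) : Set (ℝ × ℝ) := {p | coneFun q θ p < 0}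

lemma aux_mono (a b θ1 θ2 : ℝ) (h0 : 0 ≤ θ1) (h12 : θ1 ≤ θ2) (h2 : θ2 ≤ Real.pi)
    (h : b * (b * Real.cos θ1 - a * Real.sin θ1) < 0) :
    b * (b * Real.cos θ2 - a * Real.sin θ2) < 0 := by
  have hb : b ≠ 0 := by
    intro hb; rw [hb] at h; simp at h
  rcases eq_or_lt_of_le h2 with hpi | hpi
  · rw [hpi, Real.cos_pi, Real.sin_pi]
    nlinarith [mul_self_pos.mpr hb]
  · have h1pos : 0 < θ1 := by
      rcases h0.lt_or_eq with h' | h'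
      · exact h'
      · exfalso; rw [← h'] at h; rw [Real.cos_zero, Real.sin_zero] at h; nlinarith [sq_nonneg b]
    have hs1 : 0 < Real.sin θ1 := Real.sin_pos_of_pos_of_lt_pi h1pos (lt_of_le_of_lt h12 hpi)
    have hs2 : 0 < Real.sin θ2 := Real.sin_pos_of_pos_of_lt_pi (lt_of_lt_of_le h1pos h12) hpi
    have key : Real.sin θ1 * Real.cos θ2 - Real.cos θ1 * Real.sin θ2 ≤ 0 := by
      rw [← Real.sin_sub]
      exact Real.sin_nonpos_of_nonpos_of_neg_pi_le (by linarith) (by linarith)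
    have k2 : b ^ 2 * (Real.sin θ1 * Real.cos θ2 - Real.cos θ1 * Real.sin θ2) ≤ 0 :=
      mul_nonpos_of_nonneg_of_nonpos (sq_nonneg b) key
    have k3 : Real.sin θ2 * (b * (b * Real.cos θ1 - a * Real.sin θ1)) < 0 :=
      mul_neg_of_pos_of_neg hs2 h
    nlinarith [k2, k3, hs1, hs2]

lemma cone_mono (q : ℝ × ℝ) {θ1 θ2 : ℝ} (h0 : 0 ≤ θ1) (h12 : θ1 ≤ θ2) (h2 : θ2 ≤ Real.pi) :
    cone q θ1 ⊆ cone q θ2 := fun p hp =>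
  aux_mono (p.1 - q.1) (p.2 - q.2) θ1 θ2 h0 h12 h2 hp

lemma coneFun_continuous (q p : ℝ × ℝ) : Continuous fun θ => coneFun q θ p := by
  unfold coneFun; fun_prop

lemma cone_measurable (q : ℝ × ℝ) (θ : ℝ) : MeasurableSet (cone q θ) := by
  have : Continuous fun p => coneFun q θ p := by unfold coneFun; fun_prop
  exact measurableSet_lt this.measurable measurable_const

lemma coneFun_smul (q : ℝ × ℝ) (θ s : ℝ) (p : ℝ × ℝ) :
    coneFun q θ (q + s • (p - q)) = s ^ 2 * coneFun q θ p := by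
  simp only [coneFun, Prod.snd_add, Prod.fst_add, Prod.smul_snd, Prod.smul_fst,
    Prod.snd_sub, Prod.fst_sub, smul_eq_mul]
  ring

lemma aux_par (a b c s : ℝ) (h1 : c ^ 2 + s ^ 2 = 1) (h2 : b * c - a * s = 0) :
    ∃ t : ℝ, a = t * c ∧ b = t * s :=
  ⟨a * c + b * s, by linear_combination (-a) * h1 + (-s) * h2,
    by linear_combination (-b) * h1 + c * h2⟩

lemma line1_eq (q : ℝ × ℝ) :
    {p : ℝ × ℝ | p.2 - q.2 = 0} = {x : ℝ × ℝ | ∃ s : ℝ, x = q + s • ((1 : ℝ), (0 : ℝ))} := by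
  ext p
  simp only [Set.mem_setOf_eq, Prod.ext_iff, Prod.fst_add, Prod.snd_add, Prod.smul_fst,
    Prod.smul_snd, smul_eq_mul, mul_one, mul_zero, add_zero]
  constructor
  · intro h; exact ⟨p.1 - q.1, by ring, by linarith⟩
  · rintro ⟨s, h1, h2⟩; rw [h2]; ring

lemma line2_eq (q : ℝ × ℝ) (θ : ℝ) :
    {p : ℝ × ℝ | (p.2 - q.2) * Real.cos θ - (p.1 - q.1) * Real.sin θ = 0}
      = {x : ℝ × ℝ | ∃ t : ℝ, x = q + t • (Real.cos θ, Real.sin θ)} := by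
  ext p
  simp only [Set.mem_setOf_eq, Prod.ext_iff, Prod.fst_add, Prod.snd_add, Prod.smul_fst,
    Prod.smul_snd, smul_eq_mul]
  constructor
  · intro h
    obtain ⟨t, ht1, ht2⟩ := aux_par (p.1 - q.1) (p.2 - q.2) (Real.cos θ) (Real.sin θ)
      (by rw [← Real.sin_sq_add_cos_sq θ]; ring) h
    exact ⟨t, by linarith, by linarith⟩
  · rintro ⟨t, h1, h2⟩; rw [h1, h2]; ring

lemma seq_tendsto (c d : ℝ) :
    Tendsto (fun n : ℕ => c + d / (n + 1)) atTop (nhds c) := by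
  have h := tendsto_one_div_add_atTop_nhds_zero_nat (𝕜 := ℝ)
  have h2 : Tendsto (fun n : ℕ => d * (1 / (n + 1))) atTop (nhds (d * 0)) := h.const_mul d
  simpa [mul_one_div, div_eq_mul_inv] using tendsto_const_nhds.add h2


/-- Let `D` be a continuous distribution on the plane (every line through
`q` has measure zero) and `q` a fixed point. For every `ε > 0` there is a finite family
of cones with apex `q` partitioning the plane such that, for each cone `V` of the
family, the probability that the line through `q` and a random point `p` meets
`V \ {q}` is at most `1/2`. A cone with apex `q` is a set closed under positive
scaling around `q`; the line through `q` and `p` meets `V \ {q}` iff some point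
`q + s • (p - q) ≠ q` lies in `V`. -/
theorem stmt4
    (D : Measure (ℝ × ℝ)) [IsProbabilityMeasure D] (q : ℝ × ℝ)
    (hcont : ∀ v : ℝ × ℝ, v ≠ 0 → D {x : ℝ × ℝ | ∃ s : ℝ, x = q + s • v} = 0) :
    ∀ ε : ℝ, 0 < ε →
      ∃ (m : ℕ) (V : Fin m → Set (ℝ × ℝ)),
        (∀ i, ∀ p ∈ V i, ∀ s : ℝ, 0 < s → q + s • (p - q) ∈ V i) ∧
        (∀ i j, i ≠ j → Disjoint (V i) (V j)) ∧
        (⋃ i, V i) = Set.univ ∧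
        ∀ i, D {p : ℝ × ℝ | ∃ s : ℝ, q + s • (p - q) ∈ V i ∧ q + s • (p - q) ≠ q}
          ≤ 1 / 2 := by
  intro ε hε
  -- measure-zero lines
  have hline1 : D {p : ℝ × ℝ | p.2 - q.2 = 0} = 0 := by
    rw [line1_eq]
    exact hcont _ (by simp [Prod.ext_iff])
  -- the sweep family and the critical angle
  have hC0 : cone q 0 = ∅ := by
    ext p
    simp only [cone, coneFun, Real.cos_zero, Real.sin_zero, Set.mem_setOf_eq,
      Set.mem_empty_iff_false, iff_false, not_lt, mul_one, mul_zero, sub_zero]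
    nlinarith [sq_nonneg (p.2 - q.2)]
  set S : Set ℝ := {θ : ℝ | 0 ≤ θ ∧ θ ≤ Real.pi ∧ D (cone q θ) ≤ 1 / 2} with hS
  have h0S : (0 : ℝ) ∈ S := ⟨le_refl 0, Real.pi_pos.le, by rw [hC0]; simp⟩
  have hbdd : BddAbove S := ⟨Real.pi, fun θ hθ => hθ.2.1⟩
  set T : ℝ := sSup S with hT
  have hT0 : 0 ≤ T := le_csSup hbdd h0S
  have hTπ : T ≤ Real.pi := csSup_le ⟨0, h0S⟩ fun θ hθ => hθ.2.1
  -- below T the measure is at most 1/2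
  have hlt_half : ∀ θ : ℝ, 0 ≤ θ → θ < T → D (cone q θ) ≤ 1 / 2 := by
    intro θ h0θ hθ
    obtain ⟨s, hsS, hθs⟩ := exists_lt_of_lt_csSup ⟨0, h0S⟩ hθ
    exact le_trans (measure_mono (cone_mono q h0θ hθs.le hsS.2.1)) hsS.2.2
  -- Claim 1: D (cone q T) ≤ 1/2
  have hn0 : ∀ n : ℕ, 0 ≤ T - T / (n + 1) := by
    intro n
    refine sub_nonneg.mpr (div_le_self hT0 ?_)
    exact le_add_of_nonneg_left (Nat.cast_nonneg n)
  have hm1 : D (cone q T) ≤ 1 / 2 := by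
    have htend : Filter.Tendsto (fun n : ℕ => T - T / (n + 1)) Filter.atTop (nhds T) := by
      simpa [sub_eq_add_neg, neg_div] using seq_tendsto T (-T)
    have hmonoN : Monotone fun n : ℕ => cone q (T - T / (n + 1)) := by
      intro m n hmn
      refine cone_mono q (hn0 m) ?_ (le_trans (sub_le_self _ (div_nonneg hT0 (by positivity))) hTπ)
      have hd : T / (↑n + 1) ≤ T / (↑m + 1) := by
        gcongr
      linarith
    have hUnion : cone q T = ⋃ n : ℕ, cone q (T - T / (n + 1)) := by
      apply Set.Subset.antisymm
      · intro p hp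
        have hopen : {θ : ℝ | coneFun q θ p < 0} ∈ nhds T :=
          (isOpen_lt (coneFun_continuous q p) continuous_const).mem_nhds hp
        obtain ⟨n, hn⟩ := (htend.eventually (Filter.eventually_iff.mpr hopen)).exists
        exact Set.mem_iUnion.mpr ⟨n, hn⟩
      · exact Set.iUnion_subset fun n =>
          cone_mono q (hn0 n) (sub_le_self _ (div_nonneg hT0 (by positivity))) hTπ
    rw [hUnion, Directed.measure_iUnion hmonoN.directed_le]
    apply iSup_le
    intro n
    rcases lt_or_eq_of_le (show T - T / (n + 1) ≤ T from
        sub_le_self _ (div_nonneg hT0 (by positivity))) with hlt | heq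
    · exact hlt_half _ (hn0 n) hlt
    · have hTz : T = 0 := by
        have hpos : (0 : ℝ) < (n : ℝ) + 1 := by positivity
        have h1 : T / (↑n + 1) = 0 := by linarith
        rw [div_eq_zero_iff] at h1
        rcases h1 with h1 | h1
        · exact h1
        · linarith
      rw [hTz]
      norm_num
      rw [hC0]
      simp
  -- Claim 2: D ((cone q T)ᶜ) ≤ 1/2
  have hline2 : D {p : ℝ × ℝ | (p.2 - q.2) * Real.cos T - (p.1 - q.1) * Real.sin T = 0} = 0 := by
    rw [line2_eq]
    apply hcont
    intro h
    rw [Prod.ext_iff] at h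
    obtain ⟨h1, h2⟩ := h
    simp only [Prod.fst_zero, Prod.snd_zero] at h1 h2
    nlinarith [Real.sin_sq_add_cos_sq T]
  have hm2 : D ((cone q T)ᶜ) ≤ 1 / 2 := by
    rcases eq_or_lt_of_le hTπ with hpi | hpi
    · have hsub : (cone q T)ᶜ ⊆ {p : ℝ × ℝ | p.2 - q.2 = 0} := by
        intro p hp
        simp only [cone, coneFun, Set.mem_compl_iff, Set.mem_setOf_eq, not_lt] at hp
        rw [hpi, Real.cos_pi, Real.sin_pi] at hp
        show p.2 - q.2 = 0
        nlinarith [sq_nonneg (p.2 - q.2)]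
      exact le_trans (measure_mono hsub) (le_trans (le_of_eq hline1) (zero_le))
    · set θn : ℕ → ℝ := fun n => T + (Real.pi - T) / (n + 1) with hθn
      have hθn_gt : ∀ n, T < θn n := fun n =>
        lt_add_of_pos_right _ (div_pos (by linarith) (by positivity))
      have hθn_le : ∀ n, θn n ≤ Real.pi := by
        intro n
        have h1 : (Real.pi - T) / (↑n + 1) ≤ Real.pi - T :=
          div_le_self (by linarith) (le_add_of_nonneg_left (Nat.cast_nonneg n))
        simp only [hθn]
        linarith
      have hθn_nonneg : ∀ n, 0 ≤ θn n := fun n => le_trans hT0 (hθn_gt n).le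
      have hgt : ∀ n, 1 / 2 ≤ D (cone q (θn n)) := by
        intro n
        by_contra hlt
        push_neg at hlt
        have hmem : θn n ∈ S := ⟨hθn_nonneg n, hθn_le n, hlt.le⟩
        exact absurd (le_csSup hbdd hmem) (not_le.mpr (hθn_gt n))
      have hcompl : ∀ n, D ((cone q (θn n))ᶜ) ≤ 1 / 2 := by
        intro n
        rw [measure_compl (cone_measurable q _) (measure_ne_top D _), measure_univ]
        refine tsub_le_iff_right.mpr ?_
        calc (1 : ENNReal) = 1 / 2 + 1 / 2 := (ENNReal.add_halves 1).symm
          _ ≤ 1 / 2 + D (cone q (θn n)) := add_le_add_right (hgt n) _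
      have hmono2 : Monotone fun n : ℕ => (cone q (θn n))ᶜ := by
        intro m n hmn
        refine Set.compl_subset_compl.mpr ?_
        refine cone_mono q (hθn_nonneg n) ?_ (hθn_le m)
        have hd : (Real.pi - T) / (↑n + 1) ≤ (Real.pi - T) / (↑m + 1) := by
          gcongr
        simp only [hθn]
        linarith
      have htend2 : Filter.Tendsto θn Filter.atTop (nhds T) := seq_tendsto T (Real.pi - T)
      have hsub2 : (cone q T)ᶜ ⊆ (⋃ n, (cone q (θn n))ᶜ)
          ∪ {p : ℝ × ℝ | (p.2 - q.2) * Real.cos T - (p.1 - q.1) * Real.sin T = 0}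
          ∪ {p : ℝ × ℝ | p.2 - q.2 = 0} := by
        intro p hp
        have hp' : 0 ≤ coneFun q T p := not_lt.mp hp
        rcases hp'.lt_or_eq with hpos | hzero
        · left; left
          have hopen : {θ : ℝ | 0 < coneFun q θ p} ∈ nhds T :=
            (isOpen_lt continuous_const (coneFun_continuous q p)).mem_nhds hpos
          obtain ⟨n, hn⟩ := (htend2.eventually (Filter.eventually_iff.mpr hopen)).exists
          exact Set.mem_iUnion.mpr ⟨n, fun hc => absurd hc (not_lt.mpr hn.le)⟩
        · rcases mul_eq_zero.mp hzero.symm with h | h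
          · right; exact h
          · left; right; exact h
      refine le_trans (measure_mono hsub2) ?_
      refine le_trans (measure_union_le _ _) ?_
      rw [hline1, add_zero]
      refine le_trans (measure_union_le _ _) ?_
      rw [hline2, add_zero]
      rw [Directed.measure_iUnion hmono2.directed_le]
      exact iSup_le hcompl
  -- assemble
  refine ⟨3, ![{q}, cone q T, (cone q T)ᶜ \ {q}], ?_, ?_, ?_, ?_⟩
  · intro i
    fin_cases i
    · intro p hp s hs
      simp only [Set.mem_singleton_iff] at hp ⊢
      rw [hp]; simp
    · intro p hp s hs
      have h2 : (0 : ℝ) < s * s := mul_pos hs hs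
      show coneFun q T (q + s • (p - q)) < 0
      rw [coneFun_smul]
      have hp' : coneFun q T p < 0 := hp
      nlinarith [mul_neg_of_pos_of_neg h2 hp']
    · rintro p ⟨hp1, hp2⟩ s hs
      constructor
      · show ¬ coneFun q T (q + s • (p - q)) < 0
        rw [coneFun_smul]
        have hp' : ¬ coneFun q T p < 0 := hp1
        intro hc
        exact hp' (by nlinarith [sq_nonneg s])
      · simp only [Set.mem_singleton_iff, add_eq_left, smul_eq_zero, sub_eq_zero]
        push_neg
        exact ⟨hs.ne', by simpa using hp2⟩
  · have hq_not : q ∉ cone q T := by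
      simp [cone, coneFun]
    have hqC : Disjoint ({q} : Set (ℝ × ℝ)) (cone q T) := Set.disjoint_left.mpr fun p hp => by
      simp only [Set.mem_singleton_iff] at hp; subst hp; exact hq_not
    intro i j hij
    fin_cases i <;> fin_cases j
    · exact absurd rfl hij
    · exact hqC
    · exact Set.disjoint_sdiff_right
    · exact hqC.symm
    · exact absurd rfl hij
    · exact (disjoint_compl_right).mono_right Set.diff_subset
    · exact Set.disjoint_sdiff_right.symm
    · exact ((disjoint_compl_right).mono_right Set.diff_subset).symm
    · exact absurd rfl hij
  · apply Set.eq_univ_iff_forall.mpr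
    intro p
    rw [Set.mem_iUnion]
    by_cases hpq : p = q
    · exact ⟨0, by simp [hpq]⟩
    · by_cases hpC : p ∈ cone q T
      · exact ⟨1, hpC⟩
      · exact ⟨2, hpC, by simpa using hpq⟩
  · intro i
    fin_cases i
    · show D {p : ℝ × ℝ | ∃ s : ℝ, q + s • (p - q) ∈ ({q} : Set (ℝ × ℝ)) ∧
          q + s • (p - q) ≠ q} ≤ 1 / 2
      have : {p : ℝ × ℝ | ∃ s : ℝ, q + s • (p - q) ∈ ({q} : Set (ℝ × ℝ)) ∧
          q + s • (p - q) ≠ q} = ∅ := by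
        ext p
        simp only [Set.mem_setOf_eq, Set.mem_singleton_iff, Set.mem_empty_iff_false, iff_false]
        rintro ⟨s, h1, h2⟩
        exact h2 h1
      rw [this]
      simp
    · show D {p : ℝ × ℝ | ∃ s : ℝ, q + s • (p - q) ∈ cone q T ∧
          q + s • (p - q) ≠ q} ≤ 1 / 2
      have heq : {p : ℝ × ℝ | ∃ s : ℝ, q + s • (p - q) ∈ cone q T ∧
          q + s • (p - q) ≠ q} = cone q T := by
        ext p
        simp only [Set.mem_setOf_eq]
        constructor
        · rintro ⟨s, h1, h2⟩
          have h1' : coneFun q T (q + s • (p - q)) < 0 := h1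
          rw [coneFun_smul] at h1'
          show coneFun q T p < 0
          nlinarith [sq_nonneg s]
        · intro hp
          refine ⟨1, by simpa using hp, ?_⟩
          simp only [one_smul, add_sub_cancel]
          intro hc
          have : coneFun q T p < 0 := hp
          rw [hc] at this
          simp [coneFun] at this
        -- done
      rw [heq]; exact hm1
    · show D {p : ℝ × ℝ | ∃ s : ℝ, q + s • (p - q) ∈ (cone q T)ᶜ \ {q} ∧
          q + s • (p - q) ≠ q} ≤ 1 / 2
      have hsub : {p : ℝ × ℝ | ∃ s : ℝ, q + s • (p - q) ∈ (cone q T)ᶜ \ {q} ∧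
          q + s • (p - q) ≠ q} ⊆ (cone q T)ᶜ := by
        rintro p ⟨s, ⟨h1, h1'⟩, h2⟩
        intro hpC
        have hs0 : s ≠ 0 := by
          intro h; rw [h] at h2; simp at h2
        have hfp : coneFun q T p < 0 := hpC
        apply h1
        show coneFun q T (q + s • (p - q)) < 0
        rw [coneFun_smul]
        exact mul_neg_of_pos_of_neg (by positivity) hfp
      exact le_trans (measure_mono hsub) hm2
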